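/- Let X_{ℓ+1} = X_ℓ(I + a_ℓ X_ℓ^T X_ℓ), x_{ℓ+1} = (I + a_ℓ X_ℓ^T X_ℓ) x_ℓ, y_{ℓ+1} = (I + b_ℓ X_ℓ X_ℓ^T) y_ℓ, with X_1 = X, x_1 = x, y_1 = y. Then for each ℓ the quantity x_ℓ^T X_ℓ^T y_ℓ equals x^T p_ℓ(X^T X) X^T y for some real polynomial p_ℓ of degree at most (3^ℓ − 3)/2, whose coefficients are polynomial (hence smooth) functions of (a_1, b_1, ..., a_{ℓ−1}, b_{ℓ−1}). -/
import Mathlib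


open Matrix

namespace Stmt13Aux

noncomputable def fp {R : Type*} [CommRing R] (A : ℕ → R) : ℕ → Polynomial R
  | 0 => 1
  | ℓ+1 => fp A ℓ * (1 + Polynomial.C (A ℓ) * (fp A ℓ)^2 * Polynomial.X)

noncomputable def rp {R : Type*} [CommRing R] (A B : ℕ → R) : ℕ → Polynomial R
  | 0 => 1
  | ℓ+1 => rp A B ℓ *
      ((1 + Polynomial.C (A ℓ) * (fp A ℓ)^2 * Polynomial.X) *
       (1 + Polynomial.C (B ℓ) * (fp A ℓ)^2 * Polynomial.X))

def Dd : ℕ → ℕ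
  | 0 => 0
  | ℓ+1 => 3 * Dd ℓ + 1

def Ed : ℕ → ℕ
  | 0 => 0
  | ℓ+1 => Ed ℓ + 2 * (2 * Dd ℓ + 1)

lemma Dd_eq (ℓ : ℕ) : 2 * Dd ℓ + 1 = 3 ^ ℓ := by
  induction ℓ with
  | zero => rfl
  | succ ℓ ih => rw [pow_succ, ← ih]; simp [Dd]; ring

lemma Ed_eq (ℓ : ℕ) : Ed ℓ + 1 = 3 ^ ℓ := by
  induction ℓ with
  | zero => rfl
  | succ ℓ ih =>
      have := Dd_eq ℓ
      rw [pow_succ, ← ih]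
      simp only [Ed]
      omega

lemma deg_factor {R : Type*} [CommRing R] (c : R) (q : Polynomial R) {m : ℕ}
    (hq : q.natDegree ≤ m) :
    (1 + Polynomial.C c * q^2 * Polynomial.X).natDegree ≤ 2 * m + 1 := by
  refine le_trans (Polynomial.natDegree_add_le _ _) ?_
  simp only [Polynomial.natDegree_one, max_le_iff]
  constructor
  · omega
  · refine le_trans (Polynomial.natDegree_mul_le) ?_
    have h1 : (Polynomial.C c * q^2).natDegree ≤ 2 * m := by
      refine le_trans (Polynomial.natDegree_mul_le) ?_
      have := Polynomial.natDegree_pow_le (p := q) (n := 2)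
      simp only [Polynomial.natDegree_C, zero_add]
      omega
    have h2 := Polynomial.natDegree_X_le (R := R)
    omega

lemma fp_deg {R : Type*} [CommRing R] (A : ℕ → R) (ℓ : ℕ) :
    (fp A ℓ).natDegree ≤ Dd ℓ := by
  induction ℓ with
  | zero => simp [fp, Dd]
  | succ ℓ ih =>
      refine le_trans (Polynomial.natDegree_mul_le) ?_
      have := deg_factor (A ℓ) (fp A ℓ) ih
      simp only [Dd]
      omega

lemma rp_deg {R : Type*} [CommRing R] (A B : ℕ → R) (ℓ : ℕ) :
    (rp A B ℓ).natDegree ≤ Ed ℓ := by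
  induction ℓ with
  | zero => simp [rp, Ed]
  | succ ℓ ih =>
      refine le_trans (Polynomial.natDegree_mul_le) ?_
      have h1 := deg_factor (A ℓ) (fp A ℓ) (fp_deg A ℓ)
      have h2 := deg_factor (B ℓ) (fp A ℓ) (fp_deg A ℓ)
      have h3 := Polynomial.natDegree_mul_le
        (p := 1 + Polynomial.C (A ℓ) * (fp A ℓ)^2 * Polynomial.X)
        (q := 1 + Polynomial.C (B ℓ) * (fp A ℓ)^2 * Polynomial.X)
      simp only [Ed]
      omega

lemma fp_map {R S : Type*} [CommRing R] [CommRing S] (φ : R →+* S) (A : ℕ → R) (ℓ : ℕ) :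
    (fp A ℓ).map φ = fp (fun i => φ (A i)) ℓ := by
  induction ℓ with
  | zero => simp [fp]
  | succ ℓ ih => simp [fp, Polynomial.map_mul, Polynomial.map_add, Polynomial.map_one,
      Polynomial.map_pow, Polynomial.map_C, Polynomial.map_X, ih]

lemma rp_map {R S : Type*} [CommRing R] [CommRing S] (φ : R →+* S) (A B : ℕ → R) (ℓ : ℕ) :
    (rp A B ℓ).map φ = rp (fun i => φ (A i)) (fun i => φ (B i)) ℓ := by
  induction ℓ with
  | zero => simp [rp]
  | succ ℓ ih => simp [rp, Polynomial.map_mul, Polynomial.map_add, Polynomial.map_one,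
      Polynomial.map_pow, Polynomial.map_C, Polynomial.map_X, ih, fp_map]

lemma aeval_symm {m : ℕ} (M : Matrix (Fin m) (Fin m) ℝ) (hM : Mᵀ = M) (p : Polynomial ℝ) :
    (Polynomial.aeval M p)ᵀ = Polynomial.aeval M p := by
  induction p using Polynomial.induction_on' with
  | add p q hp hq => simp [hp, hq]
  | monomial nn c =>
      rw [Polynomial.aeval_monomial, Algebra.algebraMap_eq_smul_one, smul_mul_assoc, one_mul,
        transpose_smul, transpose_pow, hM]

lemma aeval_C_mul {m : ℕ} (M : Matrix (Fin m) (Fin m) ℝ) (c : ℝ) (p : Polynomial ℝ) :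
    Polynomial.aeval M (Polynomial.C c * p) = c • Polynomial.aeval M p := by
  rw [_root_.map_mul, Polynomial.aeval_C, ← Algebra.smul_def]

lemma dot_symm {m : ℕ} (A : Matrix (Fin m) (Fin m) ℝ) (x z : Fin m → ℝ) :
    A.mulVec x ⬝ᵥ z = x ⬝ᵥ Aᵀ.mulVec z := by
  rw [dotProduct_comm, Matrix.dotProduct_mulVec, Matrix.mulVec_transpose, dotProduct_comm]

end Stmt13Aux

open Stmt13Aux

/-- Joint feature-and-label propagation:
`X_{ℓ+1} = X_ℓ(I + a_ℓ X_ℓᵀX_ℓ)`, `x_{ℓ+1} = (I + a_ℓ X_ℓᵀX_ℓ) x_ℓ`,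
`y_{ℓ+1} = (I + b_ℓ X_ℓX_ℓᵀ) y_ℓ`, starting from `X, x, y`.  After `k` steps
(so at layer `ℓ = k+1`), the scalar `x_ℓᵀ X_ℓᵀ y_ℓ` equals
`xᵀ p(XᵀX) Xᵀ y` for a polynomial `p` of degree at most `(3^{ℓ}−3)/2` whose
coefficients are polynomial (hence smooth) functions of `(a_0, b_0, …, a_{k−1}, b_{k−1})`,
expressed here via multivariate polynomials `q j` over the parameters. -/
theorem stmt13 (n d k : ℕ) :
    ∃ q : ℕ → MvPolynomial (Fin k × Bool) ℝ,
      (∀ j : ℕ, (3 ^ (k + 1) - 3) / 2 < j → q j = 0) ∧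
      ∀ (X : Matrix (Fin n) (Fin d) ℝ) (x : Fin d → ℝ) (y : Fin n → ℝ)
        (a b : ℕ → ℝ)
        (Xseq : ℕ → Matrix (Fin n) (Fin d) ℝ) (xseq : ℕ → Fin d → ℝ)
        (yseq : ℕ → Fin n → ℝ),
        Xseq 0 = X → xseq 0 = x → yseq 0 = y →
        (∀ ℓ, Xseq (ℓ + 1)
          = Xseq ℓ * ((1 : Matrix (Fin d) (Fin d) ℝ) + a ℓ • ((Xseq ℓ)ᵀ * Xseq ℓ))) →
        (∀ ℓ, xseq (ℓ + 1)
          = ((1 : Matrix (Fin d) (Fin d) ℝ) + a ℓ • ((Xseq ℓ)ᵀ * Xseq ℓ)).mulVec (xseq ℓ)) →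
        (∀ ℓ, yseq (ℓ + 1)
          = ((1 : Matrix (Fin n) (Fin n) ℝ) + b ℓ • (Xseq ℓ * (Xseq ℓ)ᵀ)).mulVec (yseq ℓ)) →
        xseq k ⬝ᵥ (Xseq k)ᵀ.mulVec (yseq k)
          = x ⬝ᵥ (∑ j ∈ Finset.range ((3 ^ (k + 1) - 3) / 2 + 1),
              (MvPolynomial.eval
                (fun i : Fin k × Bool => if i.2 then a (i.1 : ℕ) else b (i.1 : ℕ)) (q j))
                • ((Xᵀ * X) ^ j)).mulVec (Xᵀ.mulVec y) := by
  classical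
  set A : ℕ → MvPolynomial (Fin k × Bool) ℝ :=
    fun ℓ => if h : ℓ < k then MvPolynomial.X (⟨ℓ, h⟩, true) else 0 with hAdef
  set B : ℕ → MvPolynomial (Fin k × Bool) ℝ :=
    fun ℓ => if h : ℓ < k then MvPolynomial.X (⟨ℓ, h⟩, false) else 0 with hBdef
  set P : Polynomial (MvPolynomial (Fin k × Bool) ℝ) := fp A k * rp A B k with hPdef
  -- degree control
  have hdeg : P.natDegree ≤ (3 ^ (k + 1) - 3) / 2 := by
    have h1 := fp_deg A k
    have h2 := rp_deg A B k
    have h3 : P.natDegree ≤ (fp A k).natDegree + (rp A B k).natDegree :=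
      Polynomial.natDegree_mul_le
    have h4 := Dd_eq k
    have h5 := Ed_eq k
    have h6 : (3:ℕ) ^ (k+1) = 3 * 3 ^ k := by rw [pow_succ]; ring
    omega
  refine ⟨fun j => P.coeff j, ?_, ?_⟩
  · intro j hj
    exact Polynomial.coeff_eq_zero_of_natDegree_lt (lt_of_le_of_lt hdeg hj)
  intro X x y a b Xs xs ys hX0 hx0 hy0 hXs hxs hys
  set vals : Fin k × Bool → ℝ := fun i => if i.2 then a (i.1 : ℕ) else b (i.1 : ℕ) with hvals
  set a' : ℕ → ℝ := fun ℓ => MvPolynomial.eval vals (A ℓ) with ha'def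
  set b' : ℕ → ℝ := fun ℓ => MvPolynomial.eval vals (B ℓ) with hb'def
  have ha' : ∀ ℓ, ℓ < k → a' ℓ = a ℓ := by
    intro ℓ h; simp [ha'def, hAdef, h, hvals]
  have hb' : ∀ ℓ, ℓ < k → b' ℓ = b ℓ := by
    intro ℓ h; simp [hb'def, hBdef, h, hvals]
  set M : Matrix (Fin d) (Fin d) ℝ := Xᵀ * X with hM
  have hMs : Mᵀ = M := by rw [hM, transpose_mul, transpose_transpose]
  have hsymm : ∀ p : Polynomial ℝ, (Polynomial.aeval M p)ᵀ = Polynomial.aeval M p :=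
    aeval_symm M hMs
  have hcomm : ∀ p q : Polynomial ℝ,
      Polynomial.aeval M p * Polynomial.aeval M q = Polynomial.aeval M (p * q) :=
    fun p q => (map_mul _ p q).symm
  have hXMe : Polynomial.aeval M Polynomial.X = M := Polynomial.aeval_X (R := ℝ) M
  have hcommM : ∀ p : Polynomial ℝ,
      Polynomial.aeval M p * M = M * Polynomial.aeval M p := by
    intro p
    calc Polynomial.aeval M p * M = Polynomial.aeval M p * Polynomial.aeval M Polynomial.X := by
          rw [hXMe]
    _ = Polynomial.aeval M (p * Polynomial.X) := hcomm _ _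
    _ = Polynomial.aeval M (Polynomial.X * p) := by rw [mul_comm]
    _ = Polynomial.aeval M Polynomial.X * Polynomial.aeval M p := (hcomm _ _).symm
    _ = M * Polynomial.aeval M p := by rw [hXMe]
  -- the main invariant
  have key : ∀ ℓ, ℓ ≤ k →
      Xs ℓ = X * Polynomial.aeval M (fp a' ℓ) ∧
      xs ℓ = (Polynomial.aeval M (fp a' ℓ)).mulVec x ∧
      (Xs ℓ)ᵀ.mulVec (ys ℓ) = (Polynomial.aeval M (rp a' b' ℓ)).mulVec (Xᵀ.mulVec y) := by
    intro ℓ hℓ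
    induction ℓ with
    | zero =>
        refine ⟨?_, ?_, ?_⟩ <;>
          simp [fp, rp, hX0, hx0, hy0]
    | succ ℓ ih =>
        have hℓk : ℓ < k := hℓ
        obtain ⟨h1, h2, h3⟩ := ih (le_of_lt hℓk)
        have hFs : (Polynomial.aeval M (fp a' ℓ))ᵀ = Polynomial.aeval M (fp a' ℓ) := hsymm _
        -- Gram matrix of the current features
        have hGram : (Xs ℓ)ᵀ * Xs ℓ = Polynomial.aeval M ((fp a' ℓ)^2 * Polynomial.X) := by
          rw [h1, transpose_mul, hFs]
          calc Polynomial.aeval M (fp a' ℓ) * Xᵀ * (X * Polynomial.aeval M (fp a' ℓ))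
              = Polynomial.aeval M (fp a' ℓ) * (M * Polynomial.aeval M (fp a' ℓ)) := by
                rw [hM, Matrix.mul_assoc, Matrix.mul_assoc]
          _ = Polynomial.aeval M (fp a' ℓ) * Polynomial.aeval M (fp a' ℓ) * M := by
                rw [← hcommM, ← mul_assoc]
          _ = Polynomial.aeval M ((fp a' ℓ)^2 * Polynomial.X) := by
                rw [_root_.map_mul, _root_.map_pow, hXMe, sq]
        set t1 : Polynomial ℝ := 1 + Polynomial.C (a' ℓ) * (fp a' ℓ)^2 * Polynomial.X with ht1
        set t2 : Polynomial ℝ := 1 + Polynomial.C (b' ℓ) * (fp a' ℓ)^2 * Polynomial.X with ht2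
        have hT1 : (1 : Matrix (Fin d) (Fin d) ℝ) + a ℓ • ((Xs ℓ)ᵀ * Xs ℓ)
            = Polynomial.aeval M t1 := by
          rw [ht1, _root_.map_add, _root_.map_one, mul_assoc, aeval_C_mul, hGram, ha' ℓ hℓk]
        have hT2 : (1 : Matrix (Fin d) (Fin d) ℝ) + b ℓ • ((Xs ℓ)ᵀ * Xs ℓ)
            = Polynomial.aeval M t2 := by
          rw [ht2, _root_.map_add, _root_.map_one, mul_assoc, aeval_C_mul, hGram, hb' ℓ hℓk]
        have hp1 : fp a' (ℓ + 1) = fp a' ℓ * t1 := by rw [ht1]; simp [fp]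
        have hp2 : fp a' (ℓ + 1) = t1 * fp a' ℓ := by rw [hp1, mul_comm]
        have hp3 : rp a' b' (ℓ + 1) = t1 * (t2 * rp a' b' ℓ) := by
          rw [ht1, ht2]; simp [rp]; ring
        refine ⟨?_, ?_, ?_⟩
        · rw [hXs ℓ, hT1, h1, Matrix.mul_assoc, hcomm, hp1]
        · rw [hxs ℓ, hT1, h2, Matrix.mulVec_mulVec, hcomm, hp2]
        · -- label invariant
          have hswap : (Xs ℓ)ᵀ * ((1 : Matrix (Fin n) (Fin n) ℝ) + b ℓ • (Xs ℓ * (Xs ℓ)ᵀ))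
              = ((1 : Matrix (Fin d) (Fin d) ℝ) + b ℓ • ((Xs ℓ)ᵀ * Xs ℓ)) * (Xs ℓ)ᵀ := by
            simp only [Matrix.mul_add, Matrix.add_mul, Matrix.mul_one, Matrix.one_mul,
              Matrix.mul_smul, Matrix.smul_mul, Matrix.mul_assoc]
          have htrans : (Xs (ℓ+1))ᵀ = Polynomial.aeval M t1 * (Xs ℓ)ᵀ := by
            rw [hXs ℓ, transpose_mul, hT1, hsymm]
          have e1 : (Xs ℓ)ᵀ.mulVec (((1 : Matrix (Fin n) (Fin n) ℝ)
                + b ℓ • (Xs ℓ * (Xs ℓ)ᵀ)).mulVec (ys ℓ))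
              = (Polynomial.aeval M t2).mulVec ((Xs ℓ)ᵀ.mulVec (ys ℓ)) := by
            rw [Matrix.mulVec_mulVec, hswap, hT2, ← Matrix.mulVec_mulVec]
          rw [htrans, hys ℓ, ← Matrix.mulVec_mulVec, e1, h3, Matrix.mulVec_mulVec,
            Matrix.mulVec_mulVec, hcomm, hcomm, mul_assoc, ← hp3]
  obtain ⟨h1, h2, h3⟩ := key k le_rfl
  -- rewrite the right-hand side sum as an aeval
  have hmap : P.map (MvPolynomial.eval vals) = fp a' k * rp a' b' k := by
    rw [hPdef, Polynomial.map_mul, fp_map, rp_map]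
  have hdeg2 : (P.map (MvPolynomial.eval vals)).natDegree < (3 ^ (k + 1) - 3) / 2 + 1 :=
    lt_of_le_of_lt (le_trans Polynomial.natDegree_map_le hdeg) (Nat.lt_succ_self _)
  have hsum : (∑ j ∈ Finset.range ((3 ^ (k + 1) - 3) / 2 + 1),
        (MvPolynomial.eval vals (P.coeff j)) • M ^ j)
      = Polynomial.aeval M (fp a' k * rp a' b' k) := by
    rw [← hmap, Polynomial.aeval_eq_sum_range' hdeg2]
    refine Finset.sum_congr rfl fun j _ => ?_
    rw [Polynomial.coeff_map]
  rw [h2, h3, dot_symm, hsymm, Matrix.mulVec_mulVec, hcomm, ← hsum]
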